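/- Define θ_k > 0 by the recursion η_k/θ_k² = η_{k+1}/θ_{k+1}² - η_{k+1}/θ_{k+1} with θ₀ = 1 and η_k > 0. Then for all k, √η_k / (∑_{i=0}^k √η_i) ≤ θ_k ≤ 2√η_k / (∑_{i=0}^k √η_i). -/

import Mathlib

theorem theta_two_sided_bound (η θ : ℕ → ℝ)
    (hη : ∀ k, 0 < η k) (hθpos : ∀ k, 0 < θ k) (hθ0 : θ 0 = 1)
    (hrec : ∀ k, η k / θ k ^ 2 = η (k + 1) / θ (k + 1) ^ 2 - η (k + 1) / θ (k + 1)) :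
    ∀ k, Real.sqrt (η k) / (∑ i ∈ Finset.range (k + 1), Real.sqrt (η i)) ≤ θ k ∧
      θ k ≤ 2 * Real.sqrt (η k) / (∑ i ∈ Finset.range (k + 1), Real.sqrt (η i)) := by
  set q : ℕ → ℝ := fun k => Real.sqrt (η k) with hq
  have hqpos : ∀ k, 0 < q k := fun k => Real.sqrt_pos.mpr (hη k)
  have hqsq : ∀ k, q k ^ 2 = η k := fun k => Real.sq_sqrt (hη k).le
  set a : ℕ → ℝ := fun k => q k / θ k with ha
  have hapos : ∀ k, 0 < a k := fun k => div_pos (hqpos k) (hθpos k)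
  set S : ℕ → ℝ := fun k => ∑ i ∈ Finset.range (k + 1), q i with hS
  have hSpos : ∀ k, 0 < S k := by
    intro k
    apply Finset.sum_pos (fun i _ => hqpos i)
    exact ⟨0, Finset.mem_range.mpr (Nat.succ_pos k)⟩
  have hasq : ∀ k, a k ^ 2 = η k / θ k ^ 2 := by
    intro k
    simp only [ha, div_pow, hqsq]
  have key : ∀ k, a (k+1) ^ 2 = a k ^ 2 + q (k+1) * a (k+1) := by
    intro k
    have h1 : q (k+1) * a (k+1) = η (k+1) / θ (k+1) := by
      simp only [ha]
      rw [mul_div_assoc']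
      congr 1
      rw [← hqsq (k+1)]; ring
    rw [hasq, hasq, hrec k, h1]; ring
  have hgt : ∀ k, q (k+1) < a (k+1) := by
    intro k
    have h := key k
    have h2 : 0 < a (k+1) * (a (k+1) - q (k+1)) := by
      nlinarith [sq_nonneg (a k), hapos k]
    nlinarith [hapos (k+1)]
  have main : ∀ k, S k / 2 ≤ a k ∧ a k ≤ S k := by
    intro k
    induction k with
    | zero =>
      have : a 0 = q 0 := by simp [ha, hθ0]
      have : S 0 = q 0 := by simp [hS]
      constructor <;> nlinarith [hqpos 0, hapos 0]
    | succ n ih =>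
      obtain ⟨ih1, ih2⟩ := ih
      have hSn : S (n+1) = S n + q (n+1) := by
        simp [hS, Finset.sum_range_succ]
      have hk := key n
      have hg := hgt n
      constructor
      · rw [hSn]
        nlinarith [hqpos (n+1), hSpos n, hapos (n+1), sq_nonneg (a n - S n / 2)]
      · rw [hSn]
        nlinarith [hqpos (n+1), hSpos n, hapos (n+1), sq_nonneg (a (n+1) - S n - q (n+1))]
  intro k
  obtain ⟨h1, h2⟩ := main k
  have hθk : θ k = q k / a k := by
    field_simp [ha, (hθpos k).ne', (hqpos k).ne']
    simp only [ha]
    field_simp [(hθpos k).ne']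
  constructor
  · rw [hθk]
    apply div_le_div_of_nonneg_left (hqpos k).le (hapos k) h2
  · rw [hθk]
    rw [div_le_div_iff₀ (hapos k) (hSpos k)]
    nlinarith [hqpos k]
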